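/- arXiv:1102.5162 — 2 statements merged into one kernel-verified Lean document; each statement's English description precedes it below -/
import Mathlib

section
/- Change of variables planarizing the tobogganic harmonic oscillator: let z ↦ x be defined by i·x = (i·z)², i.e., x = -i z², and suppose ψ is a twice-differentiable solution of -ψ''(x) + x² ψ(x) + (α² - 1/4)/x² · ψ(x) = E ψ(x) along a curve in the x-plane. Then φ(z) := ψ(-i z²)/√z satisfies -φ''(z) + 4z⁶ φ(z) + ((4α² - 1/4)/z²) φ(z) = -4E z² φ(z) on the corresponding curve in the z-plane. -/
open Complex

private lemma alg13 (α E A B C u z : ℂ) (hz : z ≠ 0) (hu : u ≠ 0) (huz : u ^ 2 = z)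
    (hC : C = -z ^ 4 * A + (α ^ 2 - 1/4) / (-z ^ 4) * A - E * A) :
    -((-2*I) * (C * (-I*(2*z)) * u + B * ((1/2) * (u/z)))
        - (1/2) * (B * (-I*(2*z)) * (u/z^2) + A * (((1:ℂ)/2 - 2) * (u/z^3))))
      + 4 * z ^ 6 * (A / u) + (4 * α ^ 2 - 1/4) / z ^ 2 * (A / u)
      = -4 * E * z ^ 2 * (A / u) := by
  subst hC
  field_simp [hz, hu, mul_ne_zero]
  have hD0 : (4 * z ^ 4 * (2 * z) * (2 * (z ^ 2 * (2 * z ^ 3))) : ℂ) ≠ 0 := by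
    simp [hz, pow_ne_zero]
  rw [← huz]
  ring_nf
  rw [Complex.I_sq]
  ring

/-- Planarizing change of variables for the tobogganic harmonic oscillator: under
`x = -iz²`, `φ(z) = ψ(-iz²)/√z`, a solution of
`-ψ'' + x²ψ + (α² - 1/4)/x² ψ = Eψ` is transformed into a solution of the sextic
Sturm–Schrödinger equation `-φ'' + 4z⁶φ + (4α² - 1/4)/z² φ = -4Ez² φ`. -/
theorem stmt13 (α E : ℂ) (ψ : ℂ → ℂ)
    (hψ1 : ∀ x : ℂ, x ≠ 0 → DifferentiableAt ℂ ψ x)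
    (hψ2 : ∀ x : ℂ, x ≠ 0 → DifferentiableAt ℂ (deriv ψ) x)
    (hODE : ∀ x : ℂ, x ≠ 0 →
      -deriv (deriv ψ) x + x ^ 2 * ψ x + (α ^ 2 - 1/4) / x ^ 2 * ψ x = E * ψ x)
    (φ : ℂ → ℂ)
    (hφ : ∀ z : ℂ, φ z = ψ (-Complex.I * z ^ 2) / z ^ ((1 : ℂ) / 2)) :
    ∀ z : ℂ, (0 < z.re ∨ z.im ≠ 0) →
      -deriv (deriv φ) z + 4 * z ^ 6 * φ z + (4 * α ^ 2 - 1/4) / z ^ 2 * φ z =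
        -4 * E * z ^ 2 * φ z := by
  have hφfun : φ = fun z : ℂ => ψ (-Complex.I * z ^ 2) / z ^ ((1 : ℂ) / 2) := funext hφ
  intro z hz
  have hzS : z ∈ Complex.slitPlane := hz
  have hz0 : z ≠ 0 := Complex.slitPlane_ne_zero hzS
  -- first derivative of φ on the slit plane
  have key1 : ∀ w ∈ Complex.slitPlane, HasDerivAt φ
      ((-2*I) * (deriv ψ (-I * w ^ 2) * w ^ ((1:ℂ)/2))
        - (1/2) * (ψ (-I * w ^ 2) * w ^ ((1:ℂ)/2 - 2))) w := by
    intro w hw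
    have hw0 : w ≠ 0 := Complex.slitPlane_ne_zero hw
    have hx0 : -I * w ^ 2 ≠ 0 := by
      simp [hw0, Complex.I_ne_zero]
    have h1 : HasDerivAt (fun t : ℂ => -I * t ^ 2) (-I * (2 * w)) w := by
      simpa using (hasDerivAt_pow 2 w).const_mul (-I)
    have hg : HasDerivAt (fun t : ℂ => ψ (-I * t ^ 2))
        (deriv ψ (-I * w ^ 2) * (-I * (2 * w))) w :=
      ((hψ1 _ hx0).hasDerivAt).comp w h1
    have hp : HasDerivAt (fun t : ℂ => t ^ ((1:ℂ)/2)) ((1:ℂ)/2 * w ^ ((1:ℂ)/2 - 1)) w :=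
      (Complex.hasStrictDerivAt_cpow_const hw).hasDerivAt
    have hp0 : w ^ ((1:ℂ)/2) ≠ 0 := by
      simp [Complex.cpow_eq_zero_iff, hw0]
    have hdiv : HasDerivAt (fun t : ℂ => ψ (-I * t ^ 2) / t ^ ((1:ℂ)/2))
        ((deriv ψ (-I * w ^ 2) * (-I * (2 * w)) * w ^ ((1:ℂ)/2)
          - ψ (-I * w ^ 2) * ((1:ℂ)/2 * w ^ ((1:ℂ)/2 - 1))) / (w ^ ((1:ℂ)/2)) ^ 2) w :=
      hg.div hp hp0
    have e1 : (w ^ ((1:ℂ)/2)) ^ 2 = w := by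
      rw [sq, ← Complex.cpow_add _ _ hw0]; norm_num
    have e2 : w ^ ((1:ℂ)/2 - 1) = w ^ ((1:ℂ)/2) / w := by
      rw [Complex.cpow_sub _ _ hw0, Complex.cpow_one]
    have e3 : w ^ ((1:ℂ)/2 - 2) = w ^ ((1:ℂ)/2) / w ^ 2 := by
      rw [Complex.cpow_sub _ _ hw0, show ((2:ℂ)) = ((2:ℕ):ℂ) by norm_num,
        Complex.cpow_natCast]
    have veq : (deriv ψ (-I * w ^ 2) * (-I * (2 * w)) * w ^ ((1:ℂ)/2)
          - ψ (-I * w ^ 2) * ((1:ℂ)/2 * w ^ ((1:ℂ)/2 - 1))) / (w ^ ((1:ℂ)/2)) ^ 2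
        = (-2*I) * (deriv ψ (-I * w ^ 2) * w ^ ((1:ℂ)/2))
            - (1/2) * (ψ (-I * w ^ 2) * w ^ ((1:ℂ)/2 - 2)) := by
      rw [e1, e2, e3]
      field_simp
    rw [hφfun]
    exact veq ▸ hdiv
  -- second derivative
  set G1 : ℂ → ℂ := fun w => (-2*I) * (deriv ψ (-I * w ^ 2) * w ^ ((1:ℂ)/2))
      - (1/2) * (ψ (-I * w ^ 2) * w ^ ((1:ℂ)/2 - 2)) with hG1def
  have hev : deriv φ =ᶠ[nhds z] G1 := by
    filter_upwards [Complex.isOpen_slitPlane.mem_nhds hzS] with w hw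
    exact (key1 w hw).deriv
  have hx0 : -I * z ^ 2 ≠ 0 := by
    simp [hz0, Complex.I_ne_zero]
  have h1 : HasDerivAt (fun t : ℂ => -I * t ^ 2) (-I * (2 * z)) z := by
    simpa using (hasDerivAt_pow 2 z).const_mul (-I)
  have hA : HasDerivAt (fun t : ℂ => ψ (-I * t ^ 2))
      (deriv ψ (-I * z ^ 2) * (-I * (2 * z))) z :=
    ((hψ1 _ hx0).hasDerivAt).comp z h1
  have hB : HasDerivAt (fun t : ℂ => deriv ψ (-I * t ^ 2))
      (deriv (deriv ψ) (-I * z ^ 2) * (-I * (2 * z))) z :=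
    by have := ((hψ2 _ hx0).hasDerivAt).comp z h1; exact this
  have hP : HasDerivAt (fun t : ℂ => t ^ ((1:ℂ)/2)) ((1:ℂ)/2 * z ^ ((1:ℂ)/2 - 1)) z :=
    (Complex.hasStrictDerivAt_cpow_const hzS).hasDerivAt
  have hQ : HasDerivAt (fun t : ℂ => t ^ ((1:ℂ)/2 - 2))
      (((1:ℂ)/2 - 2) * z ^ ((1:ℂ)/2 - 2 - 1)) z :=
    (Complex.hasStrictDerivAt_cpow_const hzS).hasDerivAt
  have hG : HasDerivAt G1
      ((-2*I) * (deriv (deriv ψ) (-I * z ^ 2) * (-I * (2 * z)) * z ^ ((1:ℂ)/2)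
          + deriv ψ (-I * z ^ 2) * ((1:ℂ)/2 * z ^ ((1:ℂ)/2 - 1)))
        - (1/2) * (deriv ψ (-I * z ^ 2) * (-I * (2 * z)) * z ^ ((1:ℂ)/2 - 2)
          + ψ (-I * z ^ 2) * (((1:ℂ)/2 - 2) * z ^ ((1:ℂ)/2 - 2 - 1)))) z :=
    ((hB.mul hP).const_mul (-2*I)).sub ((hA.mul hQ).const_mul (1/2))
  have hdd : deriv (deriv φ) z = deriv G1 z := hev.deriv_eq
  rw [hdd, hG.deriv, hφ z]
  -- cpow simplifications
  have e2 : z ^ ((1:ℂ)/2 - 1) = z ^ ((1:ℂ)/2) / z := by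
    rw [Complex.cpow_sub _ _ hz0, Complex.cpow_one]
  have e3 : z ^ ((1:ℂ)/2 - 2) = z ^ ((1:ℂ)/2) / z ^ 2 := by
    rw [Complex.cpow_sub _ _ hz0, show ((2:ℂ)) = ((2:ℕ):ℂ) by norm_num,
      Complex.cpow_natCast]
  have e4 : z ^ ((1:ℂ)/2 - 2 - 1) = z ^ ((1:ℂ)/2) / z ^ 3 := by
    rw [show ((1:ℂ)/2 - 2 - 1) = (1:ℂ)/2 - 3 by ring, Complex.cpow_sub _ _ hz0,
      show ((3:ℂ)) = ((3:ℕ):ℂ) by norm_num, Complex.cpow_natCast]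
  have hu0 : z ^ ((1:ℂ)/2) ≠ 0 := by
    simp [Complex.cpow_eq_zero_iff, hz0]
  have huz : (z ^ ((1:ℂ)/2)) ^ 2 = z := by
    rw [sq, ← Complex.cpow_add _ _ hz0]; norm_num
  have hx2 : (-I * z ^ 2) ^ 2 = -z ^ 4 := by
    rw [mul_pow, neg_pow, Complex.I_sq]; ring
  have hODE' := hODE _ hx0
  rw [hx2] at hODE'
  have hC : deriv (deriv ψ) (-I * z ^ 2)
      = -z ^ 4 * ψ (-I * z ^ 2) + (α ^ 2 - 1/4) / (-z ^ 4) * ψ (-I * z ^ 2)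
        - E * ψ (-I * z ^ 2) := by
    linear_combination -hODE'
  rw [e2, e3, e4]
  linear_combination alg13 α E (ψ (-I * z ^ 2)) (deriv ψ (-I * z ^ 2))
    (deriv (deriv ψ) (-I * z ^ 2)) (z ^ ((1:ℂ)/2)) z hz0 hu0 huz hC
end

section
/- Frequency identity for the tobogganic harmonic approximation: let L > 0, N ≥ 0 integer, τ > 0 with 2L(L+1) = (2N+1)²(10N+3) τ^{10N+5}, and V_eff(y) = L(L+1)/y² + i(-1)^N (2N+1)² y^{10N+3}. Then V_eff''(-iτ) = 2 ω_N² τ^{10N+1} with ω_N = (2N+1)√((10N+3)(10N+5)/2), and V_eff(-iτ) = -(1/2)(2N+1)²(10N+5) τ^{10N+3}. -/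
open Complex Real

/-- Frequency identity for the tobogganic harmonic approximation: with
`2L(L+1) = (2N+1)²(10N+3)τ^{10N+5}` and
`V_eff(y) = L(L+1)/y² + i(-1)^N(2N+1)² y^{10N+3}`, one has
`V_eff''(-iτ) = 2ω_N² τ^{10N+1}` with `ω_N = (2N+1)√((10N+3)(10N+5)/2)` and
`V_eff(-iτ) = -(1/2)(2N+1)²(10N+5)τ^{10N+3}`. -/
theorem stmt17 (L : ℝ) (hL : 0 < L) (N : ℕ) (τ : ℝ) (hτ : 0 < τ)
    (hcrit : 2 * L * (L + 1) = (2 * N + 1) ^ 2 * (10 * N + 3) * τ ^ (10 * N + 5))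
    (V : ℂ → ℂ)
    (hV : V = fun y => (L * (L + 1) : ℝ) / y ^ 2 +
      Complex.I * (-1 : ℂ) ^ N * ((2 * N + 1 : ℝ) : ℂ) ^ 2 * y ^ (10 * N + 3))
    (ω : ℝ) (hω : ω = (2 * N + 1) * Real.sqrt ((10 * N + 3) * (10 * N + 5) / 2)) :
    deriv (deriv V) (-Complex.I * τ) = 2 * (ω : ℂ) ^ 2 * (τ : ℂ) ^ (10 * N + 1) ∧
    V (-Complex.I * τ) =
      -(1 / 2 : ℂ) * ((2 * N + 1 : ℝ) : ℂ) ^ 2 * ((10 * N + 5 : ℝ) : ℂ) *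
        (τ : ℂ) ^ (10 * N + 3) := by
  set c : ℂ := ((L * (L + 1) : ℝ) : ℂ) with hc
  set d : ℂ := Complex.I * (-1 : ℂ) ^ N * ((2 * N + 1 : ℝ) : ℂ) ^ 2 with hd
  set m : ℕ := 10 * N + 3 with hm
  have hτC : (τ : ℂ) ≠ 0 := by exact_mod_cast hτ.ne'
  set y₀ : ℂ := -Complex.I * τ with hy₀
  have hy₀ne : y₀ ≠ 0 := by
    simp [hy₀, hτC, Complex.I_ne_zero]
  -- first derivative
  have hder1 : ∀ y : ℂ, y ≠ 0 →
      HasDerivAt V (-2 * c / y ^ 3 + d * m * y ^ (m - 1)) y := by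
    intro y hy
    have h1 : HasDerivAt (fun y : ℂ => c / y ^ 2)
        ((0 * y ^ 2 - c * ((2 : ℕ) * y ^ (2 - 1))) / (y ^ 2) ^ 2) y :=
      (hasDerivAt_const y c).div (hasDerivAt_pow 2 y) (pow_ne_zero 2 hy)
    have h2 : HasDerivAt (fun y : ℂ => d * y ^ m) (d * ((m : ℂ) * y ^ (m - 1))) y :=
      (hasDerivAt_pow m y).const_mul d
    have h3 := h1.add h2
    have hval : (0 * y ^ 2 - c * ((2 : ℕ) * y ^ (2 - 1))) / (y ^ 2) ^ 2
        + d * ((m : ℂ) * y ^ (m - 1)) = -2 * c / y ^ 3 + d * m * y ^ (m - 1) := by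
      field_simp
      ring
    rw [hV]
    exact hval ▸ h3
  have hderiv1 : ∀ y : ℂ, y ≠ 0 →
      deriv V y = -2 * c / y ^ 3 + d * m * y ^ (m - 1) := fun y hy => (hder1 y hy).deriv
  -- second derivative
  have hg : ∀ y : ℂ, y ≠ 0 →
      HasDerivAt (fun y : ℂ => -2 * c / y ^ 3 + d * m * y ^ (m - 1))
        (6 * c / y ^ 4 + d * m * (m - 1 : ℕ) * y ^ (m - 2)) y := by
    intro y hy
    have h1 : HasDerivAt (fun y : ℂ => -2 * c / y ^ 3)
        ((0 * y ^ 3 - (-2 * c) * ((3 : ℕ) * y ^ (3 - 1))) / (y ^ 3) ^ 2) y :=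
      (hasDerivAt_const y (-2 * c)).div (hasDerivAt_pow 3 y) (pow_ne_zero 3 hy)
    have h2 : HasDerivAt (fun y : ℂ => d * m * y ^ (m - 1))
        (d * m * (((m - 1 : ℕ) : ℂ) * y ^ (m - 1 - 1))) y :=
      (hasDerivAt_pow (m - 1) y).const_mul (d * m)
    have h3 := h1.add h2
    have hval : (0 * y ^ 3 - (-2 * c) * ((3 : ℕ) * y ^ (3 - 1))) / (y ^ 3) ^ 2
        + d * m * (((m - 1 : ℕ) : ℂ) * y ^ (m - 1 - 1))
        = 6 * c / y ^ 4 + d * m * (m - 1 : ℕ) * y ^ (m - 2) := by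
      have hmm : m - 1 - 1 = m - 2 := by omega
      rw [hmm]
      field_simp
      ring
    exact hval ▸ h3
  have hEq : deriv V =ᶠ[nhds y₀] (fun y : ℂ => -2 * c / y ^ 3 + d * m * y ^ (m - 1)) := by
    filter_upwards [IsOpen.mem_nhds isOpen_ne hy₀ne] with y hy
    exact hderiv1 y hy
  have hderiv2 : deriv (deriv V) y₀ = 6 * c / y₀ ^ 4 + d * m * (m - 1 : ℕ) * y₀ ^ (m - 2) := by
    rw [hEq.deriv_eq]
    exact (hg y₀ hy₀ne).deriv
  -- power facts
  have hiN : ∀ k : ℕ, (-Complex.I) ^ (10 * k) = (-1) ^ k := by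
    intro k
    rw [pow_mul]
    norm_num [pow_succ, Complex.I_mul_I]
  have hy2 : y₀ ^ 2 = -((τ : ℂ) ^ 2) := by
    rw [hy₀, mul_pow]
    norm_num [pow_succ, Complex.I_mul_I]
  have hy4 : y₀ ^ 4 = (τ : ℂ) ^ 4 := by
    rw [hy₀, mul_pow]
    norm_num [pow_succ, Complex.I_mul_I]
  have hym : y₀ ^ m = (-1) ^ N * Complex.I * (τ : ℂ) ^ m := by
    rw [hy₀, mul_pow, hm, pow_add, hiN N]
    norm_num [pow_succ, Complex.I_mul_I]
  have hym2 : y₀ ^ (m - 2) = (-1) ^ N * (-Complex.I) * (τ : ℂ) ^ (10 * N + 1) := by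
    have h2 : m - 2 = 10 * N + 1 := by omega
    rw [h2, hy₀, mul_pow, pow_add, hiN N]
    norm_num
  have hcritC : 2 * c = ((2 * N + 1 : ℝ) : ℂ) ^ 2 * ((10 * N + 3 : ℝ) : ℂ) * (τ : ℂ) ^ (10 * N + 5) := by
    have h := congrArg (Complex.ofReal) hcrit
    push_cast at h ⊢
    rw [hc]
    push_cast
    linear_combination h
  have hω2 : (ω : ℂ) ^ 2 = ((2 * N + 1 : ℝ) : ℂ) ^ 2 * (((10 * N + 3) * (10 * N + 5) / 2 : ℝ) : ℂ) := by
    have hs : (0 : ℝ) ≤ (10 * N + 3) * (10 * N + 5) / 2 := by positivity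
    have h : ω ^ 2 = (2 * N + 1) ^ 2 * ((10 * N + 3) * (10 * N + 5) / 2) := by
      rw [hω, mul_pow, Real.sq_sqrt hs]
    exact_mod_cast congrArg (Complex.ofReal) h
  have hI1 : Complex.I * (-1 : ℂ) ^ N * ((-1 : ℂ) ^ N * (-Complex.I)) = 1 := by
    have h1 : ((-1 : ℂ) ^ N) * ((-1 : ℂ) ^ N) = 1 := by
      rw [← pow_add, ← two_mul, pow_mul]; norm_num
    calc Complex.I * (-1 : ℂ) ^ N * ((-1 : ℂ) ^ N * (-Complex.I))
        = (Complex.I * (-Complex.I)) * ((-1 : ℂ) ^ N * (-1 : ℂ) ^ N) := by ring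
      _ = 1 := by rw [h1]; simp [Complex.I_mul_I]
  have hI2 : Complex.I * (-1 : ℂ) ^ N * ((-1 : ℂ) ^ N * Complex.I) = -1 := by
    have h1 : ((-1 : ℂ) ^ N) * ((-1 : ℂ) ^ N) = 1 := by
      rw [← pow_add, ← two_mul, pow_mul]; norm_num
    calc Complex.I * (-1 : ℂ) ^ N * ((-1 : ℂ) ^ N * Complex.I)
        = (Complex.I * Complex.I) * ((-1 : ℂ) ^ N * (-1 : ℂ) ^ N) := by ring
      _ = -1 := by rw [h1]; simp [Complex.I_mul_I]
  have hJX : Complex.I ^ 2 * (-1 : ℂ) ^ (N * 2) = -1 := by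
    have h : (-1 : ℂ) ^ (N * 2) = 1 := by rw [mul_comm, pow_mul]; norm_num
    rw [h, Complex.I_sq]; ring
  constructor
  · rw [hderiv2, hym2, hω2, hy4, hd]
    have hmc : ((m : ℕ) : ℂ) = 10 * N + 3 := by push_cast [hm]; ring
    have hm1c : (((m - 1 : ℕ)) : ℂ) = 10 * N + 2 := by
      have h : m - 1 = 10 * N + 2 := by omega
      rw [h]; push_cast; ring
    rw [hmc, hm1c]
    have hsplit : (τ : ℂ) ^ (10 * N + 5) = (τ : ℂ) ^ (10 * N + 1) * (τ : ℂ) ^ 4 := by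
      rw [← pow_add]
    rw [hsplit] at hcritC
    have hτ4 : (τ : ℂ) ^ 4 ≠ 0 := pow_ne_zero 4 hτC
    field_simp
    push_cast at hcritC ⊢
    linear_combination 3 * hcritC +
      (-(400 * (N:ℂ) ^ 4 + 600 * (N:ℂ) ^ 3 + 324 * (N:ℂ) ^ 2 + 74 * (N:ℂ) + 6) *
        (τ:ℂ) ^ (10 * N + 5)) * hJX
  · rw [hV]
    show c / y₀ ^ 2 + d * y₀ ^ m = _
    rw [hy2, hym, hd]
    have hsplit : (τ : ℂ) ^ (10 * N + 5) = (τ : ℂ) ^ m * (τ : ℂ) ^ 2 := by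
      rw [← pow_add, hm]
    rw [hsplit] at hcritC
    field_simp
    push_cast at hcritC ⊢
    linear_combination -hcritC +
      ((8 * (N:ℂ) ^ 2 + 8 * (N:ℂ) + 2) * (τ:ℂ) ^ (10 * N + 5)) * hJX
end
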